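/- arXiv:1009.2529 — 3 statements merged into one kernel-verified Lean document; each statement's English description precedes it below -/
import Mathlib

section
/- Let S(t,s) : X_s → X_t be a continuous process on a family of Banach spaces possessing a pullback absorber 𝔅 such that for every t, the Kuratowski measure α_t(S(t,s)𝔅(s)) → 0 as s → −∞. Then the time-dependent ω-limit family ω_𝔅(t) = ⋂_{τ≤t} cl(⋃_{s≤τ} S(t,s)𝔅(s)) is, for each t, a nonempty compact subset of X_t, is invariant (S(t,s)ω_𝔅(s) = ω_𝔅(t) for s ≤ t), and pullback attracts every pullback-bounded family. -/
/-- The Kuratowski measure of noncompactness of a subset `D` of a Banach space. -/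
noncomputable def kuratowski {X : Type*} [NormedAddCommGroup X] (D : Set X) : ℝ :=
  sInf {d : ℝ | 0 < d ∧ ∃ F : Finset X, D ⊆ ⋃ x ∈ F, Metric.ball x d}

/-- A family `B(t) ⊆ X t` is pullback-bounded if `sup_{s ≤ t} ‖B(s)‖ < ∞` for every `t`. -/
def PullbackBounded {X : ℝ → Type*} [∀ t, NormedAddCommGroup (X t)]
    (B : ∀ t, Set (X t)) : Prop :=
  ∀ t : ℝ, ∃ R : ℝ, ∀ s ≤ t, ∀ z ∈ B s, ‖z‖ ≤ R

/-- A (continuous) process on the family of spaces `X t`. -/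
def IsProcess {X : ℝ → Type*} [∀ t, NormedAddCommGroup (X t)]
    (S : ∀ t s : ℝ, X s → X t) : Prop :=
  (∀ t : ℝ, S t t = id) ∧
  (∀ t s : ℝ, s ≤ t → Continuous (S t s)) ∧
  (∀ τ t s : ℝ, s ≤ t → t ≤ τ → ∀ z : X s, S τ t (S t s z) = S τ s z)

/-- A pullback-bounded family `𝔅` is a pullback absorber if every pullback-bounded
family eventually (in the pullback sense) enters `𝔅`. -/
def IsAbsorber {X : ℝ → Type*} [∀ t, NormedAddCommGroup (X t)]
    (S : ∀ t s : ℝ, X s → X t) (𝔅 : ∀ t, Set (X t)) : Prop :=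
  PullbackBounded 𝔅 ∧
  ∀ B : ∀ t, Set (X t), PullbackBounded B → ∀ t : ℝ, ∃ t0 ≤ t,
    ∀ s ≤ t0, S t s '' B s ⊆ 𝔅 t

/-- `A` pullback attracts every pullback-bounded family. -/
def PullbackAttracts {X : ℝ → Type*} [∀ t, NormedAddCommGroup (X t)]
    (S : ∀ t s : ℝ, X s → X t) (A : ∀ t, Set (X t)) : Prop :=
  ∀ B : ∀ t, Set (X t), PullbackBounded B → ∀ t : ℝ, ∀ ε > (0:ℝ), ∃ s0 ≤ t,
    ∀ s ≤ s0, ∀ z ∈ B s, ∃ a ∈ A t, ‖S t s z - a‖ < ε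

/-- The time-dependent `ω`-limit of the family `𝔅`. -/
def timeOmegaLimit {X : ℝ → Type*} [∀ t, NormedAddCommGroup (X t)]
    (S : ∀ t s : ℝ, X s → X t) (𝔅 : ∀ t, Set (X t)) (t : ℝ) : Set (X t) :=
  ⋂ τ ∈ Set.Iic t, closure (⋃ s ∈ Set.Iic τ, S t s '' 𝔅 s)

open Filter Metric Set

section Aux

variable {X : ℝ → Type*} [∀ t, NormedAddCommGroup (X t)]
    [∀ t, NormedSpace ℝ (X t)] [∀ t, CompleteSpace (X t)]
    (S : ∀ t s : ℝ, X s → X t) (𝔅 : ∀ t, Set (X t))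

/-- The union `⋃_{s ≤ τ} S(t,s) 𝔅(s)`. -/
def Uset (t τ : ℝ) : Set (X t) := ⋃ s ∈ Set.Iic τ, S t s '' 𝔅 s

lemma Uset_mono {t τ τ' : ℝ} (h : τ ≤ τ') : Uset S 𝔅 t τ ⊆ Uset S 𝔅 t τ' :=
  Set.biUnion_subset_biUnion_left (Set.Iic_subset_Iic.2 h)

lemma mem_Uset {t τ : ℝ} {x : X t} :
    x ∈ Uset S 𝔅 t τ ↔ ∃ r ≤ τ, ∃ z ∈ 𝔅 r, S t r z = x := by
  simp [Uset]

lemma mem_omega_iff {t : ℝ} {y : X t} :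
    y ∈ timeOmegaLimit S 𝔅 t ↔ ∀ τ ≤ t, y ∈ closure (Uset S 𝔅 t τ) := by
  simp only [timeOmegaLimit, Uset, Set.mem_iInter, Set.mem_Iic]

lemma seq_le (b : ℝ) (c : ℝ) : ∃ N : ℕ, ∀ n ≥ N, b - ((n : ℝ) + 1) ≤ c := by
  refine ⟨⌈b - c⌉₊, fun n hn => ?_⟩
  have h1 : b - c ≤ (⌈b - c⌉₊ : ℝ) := Nat.le_ceil _
  have h2 : ((⌈b - c⌉₊ : ℕ) : ℝ) ≤ (n : ℝ) := Nat.cast_le.2 hn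
  linarith

lemma bnonempty (h𝔅 : IsAbsorber S 𝔅) (t : ℝ) : (𝔅 t).Nonempty := by
  obtain ⟨t0, _, h⟩ := h𝔅.2 (fun _ => {0})
    (fun t => ⟨0, by rintro s _ z hz; simp only [Set.mem_singleton_iff] at hz; simp [hz]⟩) t
  exact ⟨S t t0 0, h t0 le_rfl ⟨0, rfl, rfl⟩⟩

/-- Key small-cover lemma: the tail unions have arbitrarily fine finite ball covers. -/
lemma small_cover (hS : IsProcess S) (h𝔅 : IsAbsorber S 𝔅)
    (hα : ∀ t : ℝ, Filter.Tendsto (fun s => kuratowski (S t s '' 𝔅 s))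
      Filter.atBot (nhds 0))
    (t : ℝ) {ε : ℝ} (hε : 0 < ε) :
    ∃ τ ≤ t, ∃ F : Finset (X t), Uset S 𝔅 t τ ⊆ ⋃ x ∈ F, Metric.ball x ε := by
  obtain ⟨R, hR⟩ := h𝔅.1 t
  obtain ⟨t0, ht0t, ht0⟩ := h𝔅.2 𝔅 h𝔅.1 t
  have h2 : ∀ᶠ s in atBot, kuratowski (S t s '' 𝔅 s) < ε / 2 :=
    (hα t).eventually_lt_const (by linarith)
  obtain ⟨s₂, hs₂⟩ := eventually_atBot.1 h2
  set r := min t0 s₂ with hrdef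
  have hrt : r ≤ t := le_trans (min_le_left _ _) ht0t
  have hD : S t r '' 𝔅 r ⊆ 𝔅 t := ht0 r (min_le_left _ _)
  have hk : kuratowski (S t r '' 𝔅 r) < ε / 2 := hs₂ r (min_le_right _ _)
  have hmem : (max R 0 + 1) ∈ {d : ℝ | 0 < d ∧
      ∃ F : Finset (X t), (S t r '' 𝔅 r) ⊆ ⋃ x ∈ F, Metric.ball x d} := by
    constructor
    · have := le_max_right R 0; linarith
    · refine ⟨{0}, fun z hz => ?_⟩
      have hzR : ‖z‖ ≤ R := hR t le_rfl z (hD hz)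
      have h3 : R ≤ max R 0 := le_max_left _ _
      simp only [Finset.mem_singleton, Set.mem_iUnion, Metric.mem_ball, exists_prop]
      exact ⟨0, rfl, by rw [dist_zero_right]; linarith⟩
  obtain ⟨d, hd, hdlt⟩ := exists_lt_of_csInf_lt ⟨_, hmem⟩ hk
  obtain ⟨hd0, F, hF⟩ := hd
  obtain ⟨r0, hr0r, hr0⟩ := h𝔅.2 𝔅 h𝔅.1 r
  refine ⟨r0, le_trans hr0r hrt, F, fun x hx => ?_⟩
  obtain ⟨s', hs', z, hz, rfl⟩ := (mem_Uset S 𝔅).1 hx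
  have h1 : S r s' z ∈ 𝔅 r := hr0 s' hs' ⟨z, hz, rfl⟩
  have h2' : S t r (S r s' z) = S t s' z := hS.2.2 t r s' (le_trans hs' hr0r) hrt z
  have h3 : S t s' z ∈ S t r '' 𝔅 r := ⟨_, h1, h2'⟩
  obtain ⟨c, hc, hcc⟩ := Set.mem_iUnion₂.1 (hF h3)
  exact Set.mem_iUnion₂.2 ⟨c, hc, Metric.ball_subset_ball (by linarith) hcc⟩

/-- Compactness-extraction lemma: any sequence in shrinking tail unions has a
subsequence converging to a point of the ω-limit. -/
lemma exists_subseq (hS : IsProcess S) (h𝔅 : IsAbsorber S 𝔅)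
    (hα : ∀ t : ℝ, Filter.Tendsto (fun s => kuratowski (S t s '' 𝔅 s))
      Filter.atBot (nhds 0))
    (t : ℝ) (τ : ℕ → ℝ)
    (hτ : ∀ c : ℝ, ∃ N, ∀ n ≥ N, τ n ≤ c) (x : ℕ → X t)
    (hx : ∀ n, x n ∈ Uset S 𝔅 t (τ n)) :
    ∃ y ∈ timeOmegaLimit S 𝔅 t, ∃ φ : ℕ → ℕ, StrictMono φ ∧
      Tendsto (fun n => x (φ n)) atTop (nhds y) := by
  have htb : TotallyBounded (Set.range x) := by
    rw [Metric.totallyBounded_iff]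
    intro ε hε
    obtain ⟨τs, hτst, F, hF⟩ := small_cover S 𝔅 hS h𝔅 hα t hε
    obtain ⟨N, hN⟩ := hτ τs
    refine ⟨↑F ∪ x '' {k | k < N},
      (F.finite_toSet.union ((Set.finite_Iio N).image x)), ?_⟩
    rintro _ ⟨n, rfl⟩
    by_cases hn : n < N
    · exact Set.mem_iUnion₂.2 ⟨x n, Or.inr ⟨n, hn, rfl⟩, Metric.mem_ball_self hε⟩
    · have hmem : x n ∈ Uset S 𝔅 t τs :=
        Uset_mono S 𝔅 (hN n (le_of_not_gt hn)) (hx n)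
      obtain ⟨c, hc, hcc⟩ := Set.mem_iUnion₂.1 (hF hmem)
      exact Set.mem_iUnion₂.2 ⟨c, Or.inl hc, hcc⟩
  have hcompact : IsCompact (closure (Set.range x)) :=
    TotallyBounded.isCompact_of_isClosed htb.closure isClosed_closure
  obtain ⟨y, _, φ, hφ, hlim⟩ :=
    hcompact.tendsto_subseq (fun n => subset_closure (Set.mem_range_self n))
  refine ⟨y, ?_, φ, hφ, hlim⟩
  rw [mem_omega_iff]
  intro τ' _
  obtain ⟨N, hN⟩ := hτ τ'
  refine mem_closure_of_tendsto hlim ?_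
  filter_upwards [eventually_ge_atTop N] with n hn
  exact Uset_mono S 𝔅 (hN (φ n) (le_trans hn hφ.le_apply)) (hx (φ n))

/-- The tail unions attract: elements eventually come `ε`-close to the ω-limit. -/
lemma kattr (hS : IsProcess S) (h𝔅 : IsAbsorber S 𝔅)
    (hα : ∀ t : ℝ, Filter.Tendsto (fun s => kuratowski (S t s '' 𝔅 s))
      Filter.atBot (nhds 0))
    (t : ℝ) {ε : ℝ} (hε : 0 < ε) :
    ∃ τ0 ≤ t, ∀ x ∈ Uset S 𝔅 t τ0,
      ∃ a ∈ timeOmegaLimit S 𝔅 t, ‖x - a‖ < ε := by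
  by_contra h
  push_neg at h
  have hch : ∀ n : ℕ, ∃ x ∈ Uset S 𝔅 t (t - ((n : ℝ) + 1)),
      ∀ a ∈ timeOmegaLimit S 𝔅 t, ε ≤ ‖x - a‖ := by
    intro n
    have hn : (0 : ℝ) ≤ (n : ℝ) := Nat.cast_nonneg n
    exact h (t - ((n : ℝ) + 1)) (by linarith)
  choose x hxU hxd using hch
  obtain ⟨y, hy, φ, hφ, hlim⟩ :=
    exists_subseq S 𝔅 hS h𝔅 hα t (fun n => t - ((n : ℝ) + 1)) (seq_le t) x hxU
  have hnorm : Tendsto (fun n => ‖x (φ n) - y‖) atTop (nhds 0) :=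
    tendsto_iff_norm_sub_tendsto_zero.1 hlim
  obtain ⟨n, hn⟩ := (hnorm.eventually_lt_const hε).exists
  exact absurd hn (not_lt.2 (hxd (φ n) y hy))

end Aux

/-- Theorem 2.1: if the process possesses a pullback absorber `𝔅`
with `α_t(S(t,s)𝔅(s)) → 0` as `s → -∞`, then `ω_𝔅` is a time-dependent global
attractor: nonempty compact, invariant, and pullback attracting. -/
theorem stmt_10 {X : ℝ → Type*} [∀ t, NormedAddCommGroup (X t)]
    [∀ t, NormedSpace ℝ (X t)] [∀ t, CompleteSpace (X t)]
    (S : ∀ t s : ℝ, X s → X t) (hS : IsProcess S)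
    (𝔅 : ∀ t, Set (X t)) (h𝔅 : IsAbsorber S 𝔅)
    (hα : ∀ t : ℝ, Filter.Tendsto (fun s => kuratowski (S t s '' 𝔅 s))
      Filter.atBot (nhds 0)) :
    (∀ t, (timeOmegaLimit S 𝔅 t).Nonempty ∧ IsCompact (timeOmegaLimit S 𝔅 t)) ∧
    (∀ s t : ℝ, s ≤ t → S t s '' timeOmegaLimit S 𝔅 s = timeOmegaLimit S 𝔅 t) ∧
    PullbackAttracts S (timeOmegaLimit S 𝔅) := by
  obtain ⟨hid, hcont, hco⟩ := hS
  have hS' : IsProcess S := ⟨hid, hcont, hco⟩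
  refine ⟨?_, ?_, ?_⟩
  · -- nonempty and compact
    intro t
    constructor
    · -- nonempty
      have hx : ∀ n : ℕ, ∃ x, x ∈ Uset S 𝔅 t (t - ((n : ℝ) + 1)) := by
        intro n
        obtain ⟨z, hz⟩ := bnonempty S 𝔅 h𝔅 (t - ((n : ℝ) + 1))
        exact ⟨S t (t - ((n : ℝ) + 1)) z,
          (mem_Uset S 𝔅).2 ⟨t - ((n : ℝ) + 1), le_rfl, z, hz, rfl⟩⟩
      choose x hxU using hx
      obtain ⟨y, hy, _⟩ :=
        exists_subseq S 𝔅 hS' h𝔅 hα t (fun n => t - ((n : ℝ) + 1)) (seq_le t) x hxU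
      exact ⟨y, hy⟩
    · -- compact
      apply TotallyBounded.isCompact_of_isClosed
      · rw [Metric.totallyBounded_iff]
        intro ε hε
        obtain ⟨τ, hτt, F, hF⟩ := small_cover S 𝔅 hS' h𝔅 hα t (half_pos hε)
        refine ⟨↑F, F.finite_toSet, ?_⟩
        intro y hy
        have h1 : y ∈ closure (Uset S 𝔅 t τ) := (mem_omega_iff S 𝔅).1 hy τ hτt
        have h2 : y ∈ closure (⋃ x ∈ (F : Set (X t)), Metric.ball x (ε / 2)) := by
          refine closure_mono ?_ h1
          intro u hu
          simpa using hF hu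
        have h3 : closure (⋃ x ∈ (F : Set (X t)), Metric.ball x (ε / 2)) ⊆
            ⋃ x ∈ (F : Set (X t)), Metric.closedBall x (ε / 2) :=
          closure_minimal
            (Set.iUnion₂_mono fun c _ => Metric.ball_subset_closedBall)
            (F.finite_toSet.isClosed_biUnion fun c _ => Metric.isClosed_closedBall)
        obtain ⟨c, hc, hcc⟩ := Set.mem_iUnion₂.1 (h3 h2)
        exact Set.mem_iUnion₂.2
          ⟨c, hc, Metric.closedBall_subset_ball (by linarith) hcc⟩
      · exact isClosed_biInter fun τ _ => isClosed_closure
  · -- invariance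
    intro s t hst
    apply Set.Subset.antisymm
    · rintro _ ⟨x, hx, rfl⟩
      rw [mem_omega_iff]
      intro τ hτ
      have hms : min τ s ≤ s := min_le_right _ _
      have hx' : x ∈ closure (Uset S 𝔅 s (min τ s)) :=
        (mem_omega_iff S 𝔅).1 hx _ hms
      have himg : S t s '' Uset S 𝔅 s (min τ s) ⊆ Uset S 𝔅 t τ := by
        rintro _ ⟨u, hu, rfl⟩
        obtain ⟨r, hrτ', z, hz, rfl⟩ := (mem_Uset S 𝔅).1 hu
        exact (mem_Uset S 𝔅).2 ⟨r, le_trans hrτ' (min_le_left _ _), z, hz,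
          (hco t s r (le_trans hrτ' hms) hst z).symm⟩
      have h1 : S t s x ∈ S t s '' closure (Uset S 𝔅 s (min τ s)) :=
        Set.mem_image_of_mem _ hx'
      have h2 : S t s '' closure (Uset S 𝔅 s (min τ s)) ⊆
          closure (S t s '' Uset S 𝔅 s (min τ s)) :=
        image_closure_subset_closure_image (hcont t s hst)
      exact closure_mono himg (h2 h1)
    · intro y hy
      have h1 : ∀ n : ℕ, ∃ r ≤ s - ((n : ℝ) + 1), ∃ z ∈ 𝔅 r,
          dist (S t r z) y < 1 / ((n : ℝ) + 1) := by
        intro n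
        have hn : (0 : ℝ) ≤ (n : ℝ) := Nat.cast_nonneg n
        have hyc : y ∈ closure (Uset S 𝔅 t (s - ((n : ℝ) + 1))) :=
          (mem_omega_iff S 𝔅).1 hy _ (by linarith)
        obtain ⟨u, hu, hd⟩ :=
          Metric.mem_closure_iff.1 hyc (1 / ((n : ℝ) + 1)) (by positivity)
        obtain ⟨r, hr, z, hz, rfl⟩ := (mem_Uset S 𝔅).1 hu
        exact ⟨r, hr, z, hz, by rwa [dist_comm]⟩
      choose r hr z hz hd using h1
      have hwU : ∀ n : ℕ, S s (r n) (z n) ∈ Uset S 𝔅 s (s - ((n : ℝ) + 1)) :=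
        fun n => (mem_Uset S 𝔅).2 ⟨r n, hr n, z n, hz n, rfl⟩
      obtain ⟨x, hxω, φ, hφ, hlim⟩ :=
        exists_subseq S 𝔅 hS' h𝔅 hα s (fun n => s - ((n : ℝ) + 1)) (seq_le s)
          (fun n => S s (r n) (z n)) hwU
      refine ⟨x, hxω, ?_⟩
      have h2 : Filter.Tendsto (fun n => S t s (S s (r (φ n)) (z (φ n))))
          Filter.atTop (nhds (S t s x)) :=
        Filter.Tendsto.comp ((hcont t s hst).tendsto x) hlim
      have h3 : ∀ n : ℕ, S t s (S s (r n) (z n)) = S t (r n) (z n) := by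
        intro n
        have hn : (0 : ℝ) ≤ (n : ℝ) := Nat.cast_nonneg n
        exact hco t s (r n) (le_trans (hr n) (by linarith)) hst (z n)
      have h4 : Filter.Tendsto (fun n => S t (r n) (z n)) Filter.atTop (nhds y) := by
        rw [tendsto_iff_dist_tendsto_zero]
        exact squeeze_zero (fun n => dist_nonneg) (fun n => (hd n).le)
          tendsto_one_div_add_atTop_nhds_zero_nat
      have h5 : Filter.Tendsto (fun n => S t (r (φ n)) (z (φ n)))
          Filter.atTop (nhds y) := h4.comp hφ.tendsto_atTop
      have h6 : Filter.Tendsto (fun n => S t s (S s (r (φ n)) (z (φ n))))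
          Filter.atTop (nhds y) := by simpa only [h3] using h5
      exact tendsto_nhds_unique h2 h6
  · -- pullback attraction
    intro B hB t ε hε
    obtain ⟨τ0, hτ0t, hτ0⟩ := kattr S 𝔅 hS' h𝔅 hα t hε
    obtain ⟨s1, hs1, habs⟩ := h𝔅.2 B hB τ0
    refine ⟨s1, le_trans hs1 hτ0t, fun s hs z hzB => ?_⟩
    have h1 : S τ0 s z ∈ 𝔅 τ0 := habs s hs ⟨z, hzB, rfl⟩
    have h2 : S t τ0 (S τ0 s z) = S t s z := hco t τ0 s (le_trans hs hs1) hτ0t z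
    have h3 : S t s z ∈ Uset S 𝔅 t τ0 :=
      (mem_Uset S 𝔅).2 ⟨τ0, le_rfl, S τ0 s z, h1, h2⟩
    exact hτ0 _ h3
end

section
/- Under the hypotheses of the decomposition criterion (S(t,s)𝔅(s) = P(t,s) + N(t,s), with ‖P(t,s)‖_{X_t} → 0 as s → −∞ and N(t,s) compact), suppose additionally there are Banach spaces Y_t compactly embedded in X_t with equibounded injections on (−∞,t], and closed balls of Y_t closed in X_t, and sup_{s ≤ t} ‖N(t,s)‖_{Y_t} = h(t) < ∞ for each t. Then the global attractor A satisfies ‖A(t)‖_{Y_t} ≤ h(t) for all t, and A is a pullback-bounded family (hence unique among pullback-bounded time-dependent global attractors). -/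
/-- Corollary 2.4: under the decomposition criterion, if moreover the
compact part `N(t,s)` lies in spaces `Y_t` compactly embedded in `X_t` (via `j t`),
with equibounded injections on `(-∞,t]`, closed balls of `Y_t` closed in `X_t`, and
`sup_{s ≤ t} ‖N(t,s)‖_{Y_t} ≤ h(t) < ∞`, then the attractor `A(t) = ω_𝔅(t)`
satisfies `‖A(t)‖_{Y_t} ≤ h(t)` for all `t`, and `A` is pullback-bounded. -/
theorem stmt_12 {X Y : ℝ → Type*} [∀ t, NormedAddCommGroup (X t)]
    [∀ t, NormedSpace ℝ (X t)] [∀ t, CompleteSpace (X t)]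
    [∀ t, NormedAddCommGroup (Y t)] [∀ t, NormedSpace ℝ (Y t)]
    (S : ∀ t s : ℝ, X s → X t) (hS : IsProcess S)
    (𝔅 : ∀ t, Set (X t)) (h𝔅 : IsAbsorber S 𝔅)
    (j : ∀ t : ℝ, Y t →L[ℝ] X t) (hj_inj : ∀ t, Function.Injective (j t))
    -- compact embedding Y_t ⋐ X_t
    (hcpt : ∀ t : ℝ, ∀ B : Set (Y t), Bornology.IsBounded B →
      IsCompact (closure ((j t) '' B)))
    -- equibounded injections on (-∞, t]
    (heq : ∀ t : ℝ, ∃ C : ℝ, ∀ s ≤ t, ∀ y : Y s, ‖j s y‖ ≤ C * ‖y‖)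
    -- closed balls of Y_t are closed in X_t
    (hball : ∀ t : ℝ, ∀ r : ℝ, IsClosed ((j t) '' Metric.closedBall 0 r))
    (P : ∀ t : ℝ, ℝ → Set (X t)) (N : ∀ t : ℝ, ℝ → Set (Y t))
    (hdecomp : ∀ s t : ℝ, s ≤ t → S t s '' 𝔅 s ⊆
      {x : X t | ∃ p ∈ P t s, ∃ n ∈ N t s, x = p + j t n})
    (hP : ∀ t : ℝ, ∀ ε > (0:ℝ), ∃ s0 ≤ t, ∀ s ≤ s0, ∀ p ∈ P t s, ‖p‖ ≤ ε)
    (h : ℝ → ℝ) (hmono : Monotone h)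
    (hN : ∀ t : ℝ, ∀ s ≤ t, ∀ n ∈ N t s, ‖n‖ ≤ h t) :
    (∀ t : ℝ, timeOmegaLimit S 𝔅 t ⊆ (j t) '' Metric.closedBall 0 (h t)) ∧
    PullbackBounded (timeOmegaLimit S 𝔅) := by
  have main : ∀ t : ℝ, timeOmegaLimit S 𝔅 t ⊆ (j t) '' Metric.closedBall 0 (h t) := by
    intro t x hx
    set K := (j t) '' Metric.closedBall 0 (h t) with hK
    have hKclosed : IsClosed K := hball t (h t)
    have key : ∀ ε > (0:ℝ), Metric.infDist x K ≤ ε ∧ K.Nonempty := by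
      intro ε hε
      obtain ⟨s0, hs0t, hs0⟩ := hP t ε hε
      have hxτ : x ∈ closure (⋃ s ∈ Set.Iic s0, S t s '' 𝔅 s) :=
        Set.mem_iInter₂.mp hx s0 hs0t
      have hU : (⋃ s ∈ Set.Iic s0, S t s '' 𝔅 s) ⊆ {y | Metric.infDist y K ≤ ε} := by
        intro u hu
        simp only [Set.mem_iUnion, Set.mem_Iic] at hu
        obtain ⟨s, hs, hmem⟩ := hu
        obtain ⟨p, hp, n, hn, rfl⟩ := hdecomp s t (hs.trans hs0t) hmem
        have hjn : (j t) n ∈ K := by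
          refine ⟨n, ?_, rfl⟩
          simpa [Metric.mem_closedBall, dist_eq_norm] using hN t s (hs.trans hs0t) n hn
        calc Metric.infDist (p + (j t) n) K ≤ dist (p + (j t) n) ((j t) n) :=
              Metric.infDist_le_dist_of_mem hjn
          _ = ‖p‖ := by simp [dist_eq_norm]
          _ ≤ ε := hs0 s hs p hp
      have hclosed : IsClosed {y : X t | Metric.infDist y K ≤ ε} :=
        isClosed_le (Metric.continuous_infDist_pt K) continuous_const
      have h1 : Metric.infDist x K ≤ ε := (hclosed.closure_subset_iff.mpr hU) hxτ
      have hne : K.Nonempty := by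
        obtain ⟨u, hu⟩ := closure_nonempty_iff.mp ⟨x, hxτ⟩
        simp only [Set.mem_iUnion, Set.mem_Iic] at hu
        obtain ⟨s, hs, hmem⟩ := hu
        obtain ⟨p, hp, n, hn, rfl⟩ := hdecomp s t (hs.trans hs0t) hmem
        refine ⟨(j t) n, n, ?_, rfl⟩
        simpa [Metric.mem_closedBall, dist_eq_norm] using hN t s (hs.trans hs0t) n hn
      exact ⟨h1, hne⟩
    obtain ⟨_, hKne⟩ := key 1 one_pos
    have hzero : Metric.infDist x K = 0 := by
      refine le_antisymm ?_ Metric.infDist_nonneg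
      by_contra hpos
      push_neg at hpos
      have := (key (Metric.infDist x K / 2) (by linarith)).1
      linarith
    have hxc : x ∈ closure K := (Metric.mem_closure_iff_infDist_zero hKne).mpr hzero
    rwa [hKclosed.closure_eq] at hxc
  refine ⟨main, ?_⟩
  intro t
  obtain ⟨C, hC⟩ := heq t
  refine ⟨|C| * |h t|, fun s hs z hz => ?_⟩
  obtain ⟨y, hy, rfl⟩ := main s hz
  have hy' : ‖y‖ ≤ h s := by simpa [Metric.mem_closedBall, dist_eq_norm] using hy
  calc ‖(j s) y‖ ≤ C * ‖y‖ := hC s hs y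
    _ ≤ |C| * ‖y‖ := mul_le_mul_of_nonneg_right (le_abs_self C) (norm_nonneg y)
    _ ≤ |C| * |h t| := mul_le_mul_of_nonneg_left
        (hy'.trans ((hmono hs).trans (le_abs_self _))) (abs_nonneg C)
end

section
/- Let W_k, Z_k (k ∈ ℕ) be Banach spaces with Z_k compactly embedded in W_k and κ_ε := sup_k N_ε(B_{Z_k}(1,0), W_k) < ∞ for each ε > 0. Let B_k ⊆ W_k be compact sets with sup_k ‖B_k‖_{W_k} = Q₁ < ∞, and maps U^k : B_k → B_{k−1} with U^k(B_k) = B_{k−1} admitting decompositions U^k = P^k + N^k such that ‖P^k(z¹) − P^k(z²)‖_{W_{k−1}} ≤ ϱ‖z¹ − z²‖_{W_k} with ϱ < 1/4 and ‖N^k(z¹) − N^k(z²)‖_{Z_{k−1}} ≤ Q₂‖z¹ − z²‖_{W_k} for all z¹, z² ∈ B_k. Then the fractal dimension of B₀ in W₀ satisfies dim_{W₀} B₀ ≤ (log₂ κ_{ϱ/Q₂}) / (log₂(1/(4ϱ))). -/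
/-- The minimal number of closed `ε`-balls of `W` needed to cover `K`. -/
noncomputable def coverNum {W : Type*} [NormedAddCommGroup W] (K : Set W) (ε : ℝ) : ℕ :=
  sInf {n : ℕ | ∃ F : Finset W, F.card = n ∧ K ⊆ ⋃ x ∈ F, Metric.closedBall x ε}

/-- The fractal (box-counting) dimension of `K ⊆ W`:
`limsup_{ε → 0⁺} log N_ε(K,W) / log(1/ε)`. -/
noncomputable def fractalDim {W : Type*} [NormedAddCommGroup W] (K : Set W) : ℝ :=
  Filter.limsup (fun ε : ℝ => Real.log (coverNum K ε) / Real.log (1 / ε))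
    (nhdsWithin 0 (Set.Ioi 0))

lemma coverNum_le_card {W : Type*} [NormedAddCommGroup W] {K : Set W} {ε : ℝ}
    (F : Finset W) (h : K ⊆ ⋃ x ∈ F, Metric.closedBall x ε) : coverNum K ε ≤ F.card :=
  Nat.sInf_le ⟨F, rfl, h⟩

lemma log_nat_le_log_nat {a b : ℕ} (hab : a ≤ b) (hb : 1 ≤ b) :
    Real.log a ≤ Real.log b := by
  rcases Nat.eq_zero_or_pos a with h | h
  · simp [h]
    exact Real.log_nonneg (by exact_mod_cast hb)
  · exact Real.log_le_log (by exact_mod_cast h) (by exact_mod_cast hab)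

set_option maxHeartbeats 1000000 in
/-- Lemma 6.1, generalized squeezing property: Banach spaces
`Z k ⋐ W k` with uniformly bounded covering numbers `κ_ε` of the unit balls of the
`Z k` in the `W k`, compact sets `B k` uniformly bounded by `Q₁`, surjections
`U^k : B_{k+1} → B_k` decomposed as `U^k = P^k + N^k` with `P^k` a `ϱ`-contraction
(`ϱ < 1/4`) in the `W`-norms and `N^k` Lipschitz with constant `Q₂` from the
`W`-norm to the `Z`-norm. Then
`dim_{W₀} B₀ ≤ log₂ κ_{ϱ/Q₂} / log₂(1/(4ϱ))`. -/
theorem stmt_16 {W Z : ℕ → Type*}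
    [∀ k, NormedAddCommGroup (W k)] [∀ k, NormedSpace ℝ (W k)]
    [∀ k, NormedAddCommGroup (Z k)] [∀ k, NormedSpace ℝ (Z k)]
    (j : ∀ k, Z k →L[ℝ] W k)
    (hcpt : ∀ k, IsCompact (closure ((j k) '' Metric.closedBall 0 1)))
    (κ : ℝ → ℕ)
    (hκ : ∀ ε > (0:ℝ), ∀ k, ∃ F : Finset (W k), F.card ≤ κ ε ∧
      (j k) '' Metric.closedBall 0 1 ⊆ ⋃ x ∈ F, Metric.closedBall x ε)
    (B : ∀ k, Set (W k)) (hBc : ∀ k, IsCompact (B k))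
    (Q1 : ℝ) (hQ1 : ∀ k, ∀ z ∈ B k, ‖z‖ ≤ Q1)
    (U P : ∀ k, W (k + 1) → W k) (N : ∀ k, W (k + 1) → Z k)
    (hU : ∀ k, U k '' B (k + 1) = B k)
    (hUPN : ∀ k, ∀ z ∈ B (k + 1), U k z = P k z + j k (N k z))
    (ϱ Q2 : ℝ) (hϱ0 : 0 < ϱ) (hϱ : ϱ < 1 / 4) (hQ2 : 0 < Q2)
    (hP : ∀ k, ∀ z1 ∈ B (k + 1), ∀ z2 ∈ B (k + 1),
      ‖P k z1 - P k z2‖ ≤ ϱ * ‖z1 - z2‖)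
    (hN : ∀ k, ∀ z1 ∈ B (k + 1), ∀ z2 ∈ B (k + 1),
      ‖N k z1 - N k z2‖ ≤ Q2 * ‖z1 - z2‖) :
    fractalDim (B 0) ≤ Real.logb 2 (κ (ϱ / Q2)) / Real.logb 2 (1 / (4 * ϱ)) := by
  classical
  set κ0 : ℕ := κ (ϱ / Q2) with hκ0def
  have hεpos : (0:ℝ) < ϱ / Q2 := div_pos hϱ0 hQ2
  -- κ0 ≥ 1
  have hκ1 : 1 ≤ κ0 := by
    obtain ⟨G0, hG0card, hG0cov⟩ := hκ (ϱ/Q2) hεpos 0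
    have h0mem : (0 : W 0) ∈ (j 0) '' Metric.closedBall 0 1 :=
      ⟨0, by simp, by simp⟩
    rcases Set.mem_iUnion₂.1 (hG0cov h0mem) with ⟨y, hy, _⟩
    exact le_trans (Finset.card_pos.2 ⟨y, hy⟩) hG0card
  set R : ℝ := max Q1 0 + 1 with hRdef
  have hR1 : 1 ≤ R := le_add_of_nonneg_left (le_max_right _ _)
  have hRpos : 0 < R := lt_of_lt_of_le one_pos hR1
  have hQ1R : Q1 ≤ R := le_trans (le_max_left _ _) (by linarith [le_max_right Q1 0])
  have h4ϱpos : (0:ℝ) < 4*ϱ := by linarith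
  have h4ϱlt : 4*ϱ < 1 := by linarith
  set C : ℝ := Real.log κ0 with hCdef
  set L : ℝ := Real.log (1/(4*ϱ)) with hLdef
  have hC0 : 0 ≤ C := Real.log_nonneg (by exact_mod_cast hκ1)
  have hL0 : 0 < L := Real.log_pos (by rw [lt_div_iff₀ h4ϱpos]; linarith)
  have hlogR0 : 0 ≤ Real.log R := Real.log_nonneg hR1
  -- key covering refinement step
  have step : ∀ (k : ℕ) (r : ℝ), 0 < r → ∀ F : Finset (W (k+1)),
      B (k+1) ⊆ ⋃ x ∈ F, Metric.closedBall x r →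
      ∃ F' : Finset (W k), F'.card ≤ κ0 * F.card ∧
        B k ⊆ ⋃ x ∈ F', Metric.closedBall x (4*ϱ*r) := by
    intro k r hr F hF
    obtain ⟨G, hGcard, hGcov⟩ := hκ (ϱ/Q2) hεpos k
    have h2Q2r : (0:ℝ) < 2*Q2*r := by positivity
    -- for each center pick a point of B (k+1) in the ball, if any
    let pick : W (k+1) → W (k+1) := fun x =>
      if h : (B (k+1) ∩ Metric.closedBall x r).Nonempty then h.choose else 0
    let ctr : W (k+1) × W k → W k := fun p =>
      P k (pick p.1) + j k (N k (pick p.1)) + (2*Q2*r) • p.2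
    refine ⟨(F ×ˢ G).image ctr, ?_, ?_⟩
    · calc ((F ×ˢ G).image ctr).card ≤ (F ×ˢ G).card := Finset.card_image_le
        _ = F.card * G.card := Finset.card_product F G
        _ ≤ F.card * κ0 := Nat.mul_le_mul_left _ hGcard
        _ = κ0 * F.card := Nat.mul_comm _ _
    · intro z' hz'
      rw [← hU k] at hz'
      obtain ⟨z, hzB, hzU⟩ := hz'
      obtain ⟨x, hxF, hzx⟩ := Set.mem_iUnion₂.1 (hF hzB)
      have hne : (B (k+1) ∩ Metric.closedBall x r).Nonempty := ⟨z, hzB, hzx⟩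
      have hpick : pick x ∈ B (k+1) ∩ Metric.closedBall x r := by
        simp only [pick, dif_pos hne]
        exact hne.choose_spec
      set w := pick x with hwdef
      have hwB : w ∈ B (k+1) := hpick.1
      have hzw : ‖z - w‖ ≤ 2*r := by
        have h1 : ‖z - x‖ ≤ r := by simpa [dist_eq_norm] using hzx
        have h2 : ‖x - w‖ ≤ r := by
          have := hpick.2
          simpa [dist_eq_norm, norm_sub_rev] using this
        calc ‖z - w‖ = ‖(z - x) + (x - w)‖ := by rw [sub_add_sub_cancel]
          _ ≤ ‖z - x‖ + ‖x - w‖ := norm_add_le _ _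
          _ ≤ 2*r := by linarith
      -- N k z - N k w has Z-norm ≤ 2 Q2 r
      have hNzw : ‖N k z - N k w‖ ≤ 2*Q2*r := by
        calc ‖N k z - N k w‖ ≤ Q2 * ‖z - w‖ := hN k z hzB w hwB
          _ ≤ Q2 * (2*r) := by nlinarith [norm_nonneg (z-w)]
          _ = 2*Q2*r := by ring
      set v : Z k := (2*Q2*r)⁻¹ • (N k z - N k w) with hvdef
      have hv1 : v ∈ Metric.closedBall (0 : Z k) 1 := by
        rw [Metric.mem_closedBall, dist_zero_right, hvdef, norm_smul]
        rw [norm_inv, Real.norm_of_nonneg h2Q2r.le]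
        rw [inv_mul_le_iff₀ h2Q2r, mul_one]
        exact hNzw
      obtain ⟨y, hyG, hjy⟩ := Set.mem_iUnion₂.1 (hGcov ⟨v, hv1, rfl⟩)
      have hjv : ‖j k v - y‖ ≤ ϱ/Q2 := by simpa [dist_eq_norm] using hjy
      have hsmul : j k (N k z - N k w) = (2*Q2*r) • (j k v) := by
        rw [hvdef, map_smul, smul_smul, mul_inv_cancel₀ h2Q2r.ne', one_smul]
      have hkey : ‖j k (N k z) - j k (N k w) - (2*Q2*r) • y‖ ≤ 2*ϱ*r := by
        have : j k (N k z) - j k (N k w) - (2*Q2*r) • y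
            = (2*Q2*r) • (j k v - y) := by
          rw [smul_sub, ← hsmul, map_sub]
        rw [this, norm_smul, Real.norm_of_nonneg h2Q2r.le]
        calc (2*Q2*r) * ‖j k v - y‖ ≤ (2*Q2*r) * (ϱ/Q2) := by
              nlinarith [norm_nonneg (j k v - y)]
          _ = 2*ϱ*r := by field_simp
      have hPzw : ‖P k z - P k w‖ ≤ 2*ϱ*r := by
        calc ‖P k z - P k w‖ ≤ ϱ * ‖z - w‖ := hP k z hzB w hwB
          _ ≤ ϱ * (2*r) := by nlinarith [norm_nonneg (z-w)]
          _ = 2*ϱ*r := by ring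
      have hdist : ‖U k z - ctr (x, y)‖ ≤ 4*ϱ*r := by
        rw [hUPN k z hzB]
        have heq : P k z + j k (N k z) - ctr (x, y)
            = (P k z - P k w) + (j k (N k z) - j k (N k w) - (2*Q2*r) • y) := by
          simp only [ctr, ← hwdef]
          abel
        rw [heq]
        calc ‖_ + _‖ ≤ ‖P k z - P k w‖ + ‖j k (N k z) - j k (N k w) - (2*Q2*r) • y‖ :=
              norm_add_le _ _
          _ ≤ 2*ϱ*r + 2*ϱ*r := add_le_add hPzw hkey
          _ = 4*ϱ*r := by ring
      refine Set.mem_iUnion₂.2 ⟨ctr (x, y), ?_, ?_⟩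
      · exact Finset.mem_image.2 ⟨(x, y), Finset.mem_product.2 ⟨hxF, hyG⟩, rfl⟩
      · rw [Metric.mem_closedBall, ← hzU, dist_eq_norm]
        exact hdist
  -- iterated covering
  have iter : ∀ (n k : ℕ), ∃ F : Finset (W k), F.card ≤ κ0^n ∧
      B k ⊆ ⋃ x ∈ F, Metric.closedBall x ((4*ϱ)^n * R) := by
    intro n
    induction n with
    | zero =>
      intro k
      refine ⟨{0}, by simp, ?_⟩
      intro z hz
      simp only [Finset.mem_singleton, Set.iUnion_iUnion_eq_left, pow_zero, one_mul]
      rw [Metric.mem_closedBall, dist_zero_right]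
      exact le_trans (hQ1 k z hz) hQ1R
    | succ n ih =>
      intro k
      obtain ⟨F, hFcard, hFcov⟩ := ih (k+1)
      have hrpos : (0:ℝ) < (4*ϱ)^n * R := by positivity
      obtain ⟨F', hF'card, hF'cov⟩ := step k _ hrpos F hFcov
      refine ⟨F', ?_, ?_⟩
      · calc F'.card ≤ κ0 * F.card := hF'card
          _ ≤ κ0 * κ0^n := Nat.mul_le_mul_left _ hFcard
          _ = κ0^(n+1) := (pow_succ' κ0 n).symm
      · have : 4*ϱ*((4*ϱ)^n * R) = (4*ϱ)^(n+1) * R := by ring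
        rwa [this] at hF'cov
  -- coverNum bound
  have covbound : ∀ (n : ℕ) (ε : ℝ), (4*ϱ)^n * R ≤ ε →
      coverNum (B 0) ε ≤ κ0^n := by
    intro n ε hε
    obtain ⟨F, hFcard, hFcov⟩ := iter n 0
    refine le_trans (coverNum_le_card F ?_) hFcard
    exact hFcov.trans (Set.iUnion₂_mono fun x _ => Metric.closedBall_subset_closedBall hε)
  -- pass to limsup
  have hRHS : Real.logb 2 (κ (ϱ / Q2)) / Real.logb 2 (1 / (4 * ϱ)) = C / L := by
    rw [Real.logb, Real.logb, div_div_div_cancel_right₀ (Real.log_pos one_lt_two).ne']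
  rw [hRHS]
  rw [fractalDim]
  -- nonnegativity of the function near 0
  have hev0 : ∀ᶠ ε in nhdsWithin (0:ℝ) (Set.Ioi 0),
      0 ≤ Real.log (coverNum (B 0) ε) / Real.log (1/ε) := by
    filter_upwards [Ioo_mem_nhdsGT (zero_lt_one (α := ℝ))] with ε hε
    apply div_nonneg
    · rcases Nat.eq_zero_or_pos (coverNum (B 0) ε) with h | h
      · simp [h]
      · exact Real.log_natCast_nonneg _
    · exact Real.log_nonneg (by rw [le_div_iff₀ hε.1]; linarith [hε.2])
  have hcob : Filter.IsCoboundedUnder (· ≤ ·) (nhdsWithin (0:ℝ) (Set.Ioi 0))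
      (fun ε : ℝ => Real.log (coverNum (B 0) ε) / Real.log (1 / ε)) :=
    Filter.isCoboundedUnder_le_of_eventually_le _ hev0
  refine le_of_forall_pos_le_add ?_
  intro δ hδ
  refine Filter.limsup_le_of_le hcob ?_
  -- choose M large
  obtain ⟨M, hM⟩ := exists_nat_gt (max ((C + (C/L + δ) * Real.log R)/(δ*L)) (Real.log R / L + 1))
  have hML : Real.log R < M * L := by
    have h1 : Real.log R / L + 1 < M := lt_of_le_of_lt (le_max_right _ _) hM
    have := (div_lt_iff₀ hL0).1 (by linarith : Real.log R / L < (M:ℝ) - 1)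
    linarith
  have hMδ : C + (C/L + δ) * Real.log R ≤ δ * M * L := by
    have h1 : (C + (C/L + δ) * Real.log R)/(δ*L) < M := lt_of_le_of_lt (le_max_left _ _) hM
    have := (div_lt_iff₀ (by positivity : (0:ℝ) < δ*L)).1 h1
    linarith
  -- eventual bound
  have hεub : (0:ℝ) < min ((4*ϱ)^M * R) 1 := by positivity
  filter_upwards [Ioo_mem_nhdsGT hεub] with ε hε
  obtain ⟨hε0, hεlt⟩ := hε
  have hε0' : (0:ℝ) < ε := hε0
  have hε1 : ε < 1 := lt_of_lt_of_le hεlt (min_le_right _ _)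
  have hεM : ε < (4*ϱ)^M * R := lt_of_lt_of_le hεlt (min_le_left _ _)
  -- existence of n with (4ϱ)^n R ≤ ε
  have hex : ∃ n : ℕ, (4*ϱ)^n * R ≤ ε := by
    obtain ⟨n, hn⟩ := exists_pow_lt_of_lt_one (by positivity : (0:ℝ) < ε/R) h4ϱlt
    exact ⟨n, by rw [← le_div_iff₀ hRpos]; exact hn.le⟩
  have hex2 : ∃ m : ℕ, (4*ϱ)^m * R ≤ ε ∧ ∀ i < m, ε < (4*ϱ)^i * R := by
    refine ⟨Nat.find hex, Nat.find_spec hex, fun i hi => ?_⟩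
    have := Nat.find_min hex hi
    push_neg at this
    exact this
  obtain ⟨m, hm_spec, hm_min'⟩ := hex2
  have hmgtM : M < m := by
    by_contra h
    push_neg at h
    have h1 : (4*ϱ)^M ≤ (4*ϱ)^m := pow_le_pow_of_le_one h4ϱpos.le h4ϱlt.le h
    have h2 := mul_le_mul_of_nonneg_right h1 hRpos.le
    linarith
  have hm1 : 1 ≤ m := le_trans (Nat.succ_le_succ (Nat.zero_le M)) hmgtM
  have hm_min : ε < (4*ϱ)^(m-1) * R := hm_min' (m-1) (by omega)
  -- bounds
  have hlogN : Real.log (coverNum (B 0) ε) ≤ m * C := by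
    have h1 : coverNum (B 0) ε ≤ κ0^m := covbound m ε hm_spec
    have h2 := log_nat_le_log_nat h1 (Nat.one_le_pow _ _ hκ1)
    rwa [Nat.cast_pow, Real.log_pow] at h2
  have hlogε : ((m:ℝ) - 1) * L - Real.log R < Real.log (1/ε) := by
    have h1 : Real.log ε < Real.log ((4*ϱ)^(m-1) * R) := Real.log_lt_log hε0' hm_min
    rw [Real.log_mul (by positivity) hRpos.ne', Real.log_pow] at h1
    have h2 : Real.log (4*ϱ) = -L := by
      rw [hLdef, one_div, Real.log_inv, neg_neg]
    rw [h2] at h1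
    have hcast : ((m - 1 : ℕ) : ℝ) = (m:ℝ) - 1 := by
      have := Nat.cast_sub (R := ℝ) hm1
      simpa using this
    rw [hcast] at h1
    rw [Real.log_div one_ne_zero hε0'.ne', Real.log_one]
    linarith
  have hD0 : 0 < Real.log (1/ε) := Real.log_pos (by rw [lt_div_iff₀ hε0']; linarith)
  -- final arithmetic
  rw [div_le_iff₀ hD0]
  have hK1 : (M:ℝ) ≤ (m:ℝ) - 1 := by
    have : (M:ℝ) + 1 ≤ (m:ℝ) := by exact_mod_cast hmgtM
    linarith
  set D := Real.log (1/ε) with hDdef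
  have hA : 0 < C/L + δ := by positivity
  have hDB : ((m:ℝ)-1)*L - Real.log R ≤ D := hlogε.le
  have hMK1L : (M:ℝ)*L ≤ ((m:ℝ)-1)*L := mul_le_mul_of_nonneg_right hK1 hL0.le
  have hDB0 : 0 ≤ ((m:ℝ)-1)*L - Real.log R := by linarith
  calc Real.log (coverNum (B 0) ε) ≤ m * C := hlogN
    _ ≤ (C/L + δ) * (((m:ℝ)-1)*L - Real.log R) := by
        have hAL : (C/L + δ) * L = C + δ * L := by field_simp
        have hstep : δ*(M:ℝ)*L ≤ ((m:ℝ)-1)*(δ*L) := by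
          have := mul_le_mul_of_nonneg_right hK1 (mul_nonneg hδ.le hL0.le)
          linarith
        have hexpand : (C/L + δ) * (((m:ℝ)-1)*L - Real.log R)
            = ((m:ℝ)-1)*((C/L + δ)*L) - (C/L + δ)*Real.log R := by ring
        rw [hexpand, hAL]
        linarith [hMδ, hstep]
    _ ≤ (C/L + δ) * D := mul_le_mul_of_nonneg_left hDB hA.le
end
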